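/- Let k ≥ 3 be an integer, let K be an algebraically closed field whose characteristic does not divide k, and let G = (V,E) be a finite simple graph with chromatic number exactly k+1 and girth g satisfying g > 4k. Then for every natural number d with d + k − 1 < g/(4k) (equivalently, 4k(d + k − 1) < g), Bayer's k-coloring system for G has no Nullstellensatz certificate of degree at most d. -/

import Mathlib

set_option linter.unusedSectionVars false
set_option linter.unusedVariables false
set_option maxHeartbeats 1000000


open MvPolynomial

/-- The edge polynomial `q_{uv} = Σ_{r=0}^{k-1} x_u^{k-1-r} x_v^r` of Bayer's
`k`-coloring system, as a function on unordered pairs. -/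
noncomputable def bayerQ (K : Type*) [CommRing K] {V : Type*} (k : ℕ) :
    Sym2 V → MvPolynomial V K :=
  Sym2.lift ⟨fun u v => ∑ r ∈ Finset.range k, X u ^ (k - 1 - r) * X v ^ r, by
    intro u v
    show (∑ r ∈ Finset.range k, (X u : MvPolynomial V K) ^ (k - 1 - r) * X v ^ r)
        = ∑ r ∈ Finset.range k, X v ^ (k - 1 - r) * X u ^ r
    conv_rhs => rw [← Finset.sum_range_reflect]
    refine Finset.sum_congr rfl fun r hr => ?_
    rw [Finset.mem_range] at hr
    have h : k - 1 - (k - 1 - r) = r := by omega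
    rw [h]
    ring⟩

/-- Bayer's `k`-coloring system for the graph `G` has a Nullstellensatz certificate of
degree at most `d`: polynomials `r_u` (for vertices) and `s_e` (for edges), all of total
degree at most `d`, with `Σ_u r_u (x_u^k - 1) + Σ_{{u,v} ∈ E} s_{uv} q_{uv} = 1`. -/
def HasNullCert (K : Type*) [CommRing K] {V : Type*} [Fintype V] [DecidableEq V]
    (G : SimpleGraph V) [DecidableRel G.Adj] (k d : ℕ) : Prop :=
  ∃ (r : V → MvPolynomial V K) (s : Sym2 V → MvPolynomial V K),
    (∀ u, (r u).totalDegree ≤ d) ∧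
    (∀ e ∈ G.edgeFinset, (s e).totalDegree ≤ d) ∧
    (∑ u, r u * (X u ^ k - 1)) + ∑ e ∈ G.edgeFinset, s e * bayerQ K k e = 1

namespace BayerAux

variable {V : Type*} [Fintype V] [DecidableEq V]

def inc (k : ℕ) (γ : V → Fin (k+1)) (e : Sym2 V) : V → ZMod k :=
  Sym2.lift ⟨fun x y w =>
      if γ x < γ y then (if w = y then 1 else 0) - (if w = x then 1 else 0)
      else if γ y < γ x then (if w = x then 1 else 0) - (if w = y then 1 else 0) else 0,
    by
      intro x y
      funext w
      rcases lt_trichotomy (γ x) (γ y) with h | h | h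
      · simp [h, asymm h]
      · simp [h]
      · simp [h, asymm h]⟩ e

variable {k : ℕ} {γ : V → Fin (k+1)}

lemma inc_mk (x y : V) : inc k γ s(x,y) =
    fun w => if γ x < γ y then (if w = y then 1 else 0) - (if w = x then 1 else 0)
      else if γ y < γ x then (if w = x then 1 else 0) - (if w = y then 1 else 0) else 0 := rfl

lemma inc_of_not_mem {e : Sym2 V} {w : V} (h : w ∉ e) : inc k γ e w = 0 := by
  induction e using Sym2.inductionOn with
  | hf x y =>
    simp only [Sym2.mem_iff, not_or] at h
    rw [inc_mk]
    simp [h.1, h.2]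

lemma inc_left {x y : V} (h : γ x ≠ γ y) (hxy : x ≠ y) :
    inc k γ s(x,y) x = if γ x < γ y then -1 else 1 := by
  rcases h.lt_or_gt with h' | h' <;> rw [inc_mk] <;> simp [h', asymm h', hxy, hxy.symm]

lemma inc_right {x y : V} (h : γ x ≠ γ y) (hxy : x ≠ y) :
    inc k γ s(x,y) y = if γ x < γ y then 1 else -1 := by
  rcases h.lt_or_gt with h' | h' <;> rw [inc_mk] <;> simp [h', asymm h', hxy, hxy.symm]

def bd (k : ℕ) (γ : V → Fin (k+1)) (A : Finset (Sym2 V)) : V → ZMod k :=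
  fun w => ∑ f ∈ A, inc k γ f w

def edeg (A : Finset (Sym2 V)) (w : V) : ℕ := (A.filter (fun f => w ∈ f)).card

def Good (A : Finset (Sym2 V)) : Prop :=
  ∀ B ∈ A.powerset, B.Nonempty → ∃ w, edeg B w = 1

lemma Good.subset {A B : Finset (Sym2 V)} (hA : Good A) (h : B ⊆ A) : Good B :=
  fun C hC hne => hA C (Finset.mem_powerset.2 ((Finset.mem_powerset.1 hC).trans h)) hne

/-- Edge sets all of whose edges have endpoints distinct in color (and as vertices),
whatever the chosen representation. -/
def Proper (k : ℕ) (γ : V → Fin (k+1)) (A : Finset (Sym2 V)) : Prop :=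
  ∀ f ∈ A, ∀ x y : V, f = s(x,y) → x ≠ y ∧ γ x ≠ γ y

lemma Proper.subset {A B : Finset (Sym2 V)} (hA : Proper k γ A) (h : B ⊆ A) :
    Proper k γ B := fun f hf => hA f (h hf)

lemma bd_eq_sum_filter (A : Finset (Sym2 V)) (w : V) :
    bd k γ A w = ∑ f ∈ A.filter (fun f => w ∈ f), inc k γ f w := by
  rw [bd, ← Finset.sum_filter_add_sum_filter_not A (fun f => w ∈ f)]
  have : ∑ f ∈ A.filter (fun f => ¬ w ∈ f), inc k γ f w = 0 :=
    Finset.sum_eq_zero fun f hf => inc_of_not_mem (Finset.mem_filter.1 hf).2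
  rw [this, add_zero]

section knontrivial

variable (hk : 3 ≤ k)
include hk

lemma one_ne_zero' : (1 : ZMod k) ≠ 0 := by
  have : ((1 : ℕ) : ZMod k) ≠ 0 := by
    rw [Ne, ZMod.natCast_eq_zero_iff]
    intro h
    have := Nat.le_of_dvd one_pos h
    omega
  simpa using this

lemma two_ne_zero' : (2 : ZMod k) ≠ 0 := by
  have : ((2 : ℕ) : ZMod k) ≠ 0 := by
    rw [Ne, ZMod.natCast_eq_zero_iff]
    intro h
    have := Nat.le_of_dvd two_pos h
    omega
  simpa using this

lemma neg_one_ne_zero' : (-1 : ZMod k) ≠ 0 := by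
  simp only [neg_ne_zero]; exact one_ne_zero' hk

lemma inc_pm {A : Finset (Sym2 V)} (hprop : Proper k γ A) {f : Sym2 V} (hf : f ∈ A)
    {w : V} (hw : w ∈ f) : inc k γ f w = 1 ∨ inc k γ f w = -1 := by
  induction f using Sym2.inductionOn with
  | hf x y =>
    obtain ⟨hxy, hcol⟩ := hprop _ hf x y rfl
    rcases Sym2.mem_iff.1 hw with rfl | rfl
    · rw [inc_left hcol hxy]
      split <;> simp
    · rw [inc_right hcol hxy]
      split <;> simp

lemma inc_ne_zero {A : Finset (Sym2 V)} (hprop : Proper k γ A) {f : Sym2 V} (hf : f ∈ A)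
    {w : V} (hw : w ∈ f) : inc k γ f w ≠ 0 := by
  rcases inc_pm hk hprop hf hw with h | h <;> rw [h]
  · exact one_ne_zero' hk
  · exact neg_one_ne_zero' hk

/-- leaf boundary is `±1`, in particular nonzero -/
lemma bd_of_leaf {A : Finset (Sym2 V)} (hprop : Proper k γ A) {w : V}
    (hw : edeg A w = 1) : bd k γ A w ≠ 0 := by
  obtain ⟨f, hfilter⟩ := Finset.card_eq_one.1 hw
  have hfA : f ∈ A.filter (fun f => w ∈ f) := hfilter ▸ Finset.mem_singleton_self f
  rw [Finset.mem_filter] at hfA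
  rw [bd_eq_sum_filter, hfilter, Finset.sum_singleton]
  exact inc_ne_zero hk hprop hfA.1 hfA.2

end knontrivial

/-! Mirror coloring -/

def mir (γ : V → Fin (k+1)) : V → Fin (k+1) := fun v => (γ v).rev

lemma mir_lt {x y : V} : mir γ x < mir γ y ↔ γ y < γ x := by
  simp [mir, Fin.rev_lt_rev]

lemma mir_ne {x y : V} : mir γ x ≠ mir γ y ↔ γ x ≠ γ y := by
  simp [mir, Fin.rev_inj]

lemma inc_mir (e : Sym2 V) (w : V) : inc k (mir γ) e w = - inc k γ e w := by
  induction e using Sym2.inductionOn with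
  | hf x y =>
    rcases lt_trichotomy (γ x) (γ y) with h | h | h
    · have h3 : ¬ mir γ x < mir γ y := by rw [mir_lt]; exact asymm h
      have h4 : mir γ y < mir γ x := mir_lt.2 h
      rw [inc_mk, inc_mk]
      simp only [h3, h4, h, asymm h, if_true, if_false]
      ring
    · have h1 : ¬ γ x < γ y := by rw [h]; exact lt_irrefl _
      have h2 : ¬ γ y < γ x := by rw [h]; exact lt_irrefl _
      have h3 : ¬ mir γ x < mir γ y := by rw [mir_lt]; exact h2
      have h4 : ¬ mir γ y < mir γ x := by rw [mir_lt]; exact h1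
      rw [inc_mk, inc_mk]
      simp [h1, h2, h3, h4]
    · have h3 : mir γ x < mir γ y := mir_lt.2 h
      have h4 : ¬ γ x < γ y := asymm h
      rw [inc_mk, inc_mk]
      simp only [h3, h4, h, if_true, if_false]
      ring

lemma bd_mir (A : Finset (Sym2 V)) (w : V) : bd k (mir γ) A w = - bd k γ A w := by
  rw [bd, bd, ← Finset.sum_neg_distrib]
  exact Finset.sum_congr rfl fun f _ => inc_mir f w

lemma bd_mir_eq_zero {A : Finset (Sym2 V)} {w : V} :
    bd k (mir γ) A w = 0 ↔ bd k γ A w = 0 := by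
  rw [bd_mir, neg_eq_zero]

lemma Proper.mir {A : Finset (Sym2 V)} (h : Proper k γ A) : Proper k (BayerAux.mir γ) A :=
  fun f hf x y hxy => ⟨(h f hf x y hxy).1, mir_ne.2 (h f hf x y hxy).2⟩

variable {G : SimpleGraph V} [DecidableRel G.Adj]

lemma edge_rep {f : Sym2 V} (hf : f ∈ G.edgeFinset) : ∃ x y, f = s(x,y) ∧ G.Adj x y := by
  induction f using Sym2.inductionOn with
  | hf x y => exact ⟨x, y, rfl, (SimpleGraph.mem_edgeFinset.1 hf)⟩

/-- In a path starting with the edge `s(a,b)`, any edge containing `a` is `s(a,b)`. -/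
lemma edge_of_start {a b c : V} {h : G.Adj a b} {q : G.Walk b c}
    (hp : (SimpleGraph.Walk.cons h q).IsPath) {e : Sym2 V}
    (he : e ∈ (SimpleGraph.Walk.cons h q).edges) (hx : a ∈ e) : e = s(a, b) := by
  rw [SimpleGraph.Walk.edges_cons] at he
  rcases List.mem_cons.1 he with h1 | h1
  · exact h1
  · exfalso
    obtain ⟨z, hz⟩ := hx
    have : a ∈ q.support := by
      rw [hz] at h1
      exact SimpleGraph.Walk.fst_mem_support_of_mem_edges q h1
    exact ((SimpleGraph.Walk.cons_isPath_iff h q).1 hp).2 this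

/-- From a nonempty edge set in which no vertex has degree 1, one can build a cycle
whose edges all lie in the set. -/
lemma exists_cycle_of_no_leaf {B : Finset (Sym2 V)} (hBE : B ⊆ G.edgeFinset)
    (hne : B.Nonempty) (hdeg : ∀ w, edeg B w ≠ 1) :
    ∃ (a : V) (c : G.Walk a a), c.IsCycle ∧ ∀ e ∈ c.edges, e ∈ B := by
  have key : ∀ (n : ℕ) (x y : V) (p : G.Walk y x), p.IsPath → 1 ≤ p.length →
      (∀ e ∈ p.edges, e ∈ B) → Fintype.card V - p.length ≤ n →
      ∃ (a : V) (c : G.Walk a a), c.IsCycle ∧ ∀ e ∈ c.edges, e ∈ B := by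
    intro n
    induction n with
    | zero =>
      intro x y p hp _ _ hn
      exfalso
      have := hp.length_lt
      omega
    | succ n ih =>
      intro x y p hp hlen hedges hn
      cases p with
      | nil => simp at hlen
      | @cons _ v _ hyv q =>
      rename_i hlen hedges hn
      have hy1 : s(y, v) ∈ (SimpleGraph.Walk.cons hyv q).edges := by
        simp [SimpleGraph.Walk.edges_cons]
      have hyB : s(y, v) ∈ B := hedges _ hy1
      have hydeg : 1 ≤ edeg B y := by
        apply Finset.card_pos.2
        exact ⟨s(y, v), Finset.mem_filter.2 ⟨hyB, by simp⟩⟩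
      have hy2 : 1 < edeg B y := lt_of_le_of_ne hydeg (Ne.symm (hdeg y))
      obtain ⟨f', hf', hfne⟩ := Finset.exists_mem_ne hy2 (s(y, v))
      rw [Finset.mem_filter] at hf'
      obtain ⟨hf'B, hyf'⟩ := hf'
      set z := Sym2.Mem.other' hyf' with hz
      have hrep : s(y, z) = f' := Sym2.other_spec' hyf'
      have hadj : G.Adj y z := by
        have h2 := hBE hf'B
        rw [SimpleGraph.mem_edgeFinset, ← hrep, SimpleGraph.mem_edgeSet] at h2
        exact h2
      set p := SimpleGraph.Walk.cons hyv q with hpdef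
      by_cases hzs : z ∈ p.support
      · refine ⟨y, SimpleGraph.Walk.cons hadj (p.takeUntil z hzs).reverse, ?_, ?_⟩
        · rw [SimpleGraph.Walk.cons_isCycle_iff]
          refine ⟨(hp.takeUntil hzs).reverse, ?_⟩
          intro hmem
          rw [SimpleGraph.Walk.edges_reverse, List.mem_reverse] at hmem
          have hmem' : s(y,z) ∈ p.edges :=
            SimpleGraph.Walk.edges_takeUntil_subset p hzs hmem
          have := edge_of_start hp hmem' (by simp)
          rw [hrep] at this
          exact hfne this
        · intro e he
          rw [SimpleGraph.Walk.edges_cons] at he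
          rcases List.mem_cons.1 he with h1 | h1
          · rw [h1, hrep]; exact hf'B
          · rw [SimpleGraph.Walk.edges_reverse, List.mem_reverse] at h1
            exact hedges _ (SimpleGraph.Walk.edges_takeUntil_subset p hzs h1)
      · refine ih x z (SimpleGraph.Walk.cons hadj.symm p)
          ((SimpleGraph.Walk.cons_isPath_iff _ _).2 ⟨hp, hzs⟩) (by simp) ?_ ?_
        · intro e he
          rw [SimpleGraph.Walk.edges_cons] at he
          rcases List.mem_cons.1 he with h1 | h1
          · rw [h1, Sym2.eq_swap, hrep]; exact hf'B
          · exact hedges _ h1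
        · have hlt := hp.length_lt
          simp only [SimpleGraph.Walk.length_cons] at *
          omega
  obtain ⟨e0, he0⟩ := hne
  obtain ⟨a, b, rfl, hab⟩ := edge_rep (hBE he0)
  refine key (Fintype.card V) b a hab.toWalk ?_ ?_ ?_ ?_
  · simp [SimpleGraph.Walk.isPath_def, SimpleGraph.Adj.ne hab]
  · simp
  · intro e he
    simp at he
    rw [he]; exact he0
  · omega


/-- Any nonempty edge set with fewer edges than the girth has a vertex of degree 1. -/
lemma exists_leaf_of_small {B : Finset (Sym2 V)} (hBE : B ⊆ G.edgeFinset)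
    (hne : B.Nonempty) (hsmall : (B.card : ℕ∞) < G.egirth) : ∃ w, edeg B w = 1 := by
  by_contra hno
  push_neg at hno
  obtain ⟨a, c, hc, hcB⟩ := exists_cycle_of_no_leaf hBE hne hno
  have h1 : G.egirth ≤ c.length := SimpleGraph.le_egirth.1 le_rfl a c hc
  have h2 : c.length ≤ B.card := by
    have hnd : c.edges.Nodup := hc.edges_nodup
    have : c.edges.toFinset ⊆ B := fun e he => hcB e (List.mem_toFinset.1 he)
    calc c.length = c.edges.length := (SimpleGraph.Walk.length_edges c).symm
    _ = c.edges.toFinset.card := (List.toFinset_card_of_nodup hnd).symm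
    _ ≤ B.card := Finset.card_le_card this
  have : G.egirth ≤ (B.card : ℕ∞) := h1.trans (by exact_mod_cast Nat.cast_le.2 h2)
  exact absurd (this.trans_lt hsmall) (lt_irrefl _)

/-! ### Threads -/

section Thread

variable {k : ℕ} {γ : V → Fin (k+1)}

/-- A "thread" `T` inside `A` hanging from a leaf and ending at `x`. -/
def IsThread (k : ℕ) (γ : V → Fin (k+1)) (A T : Finset (Sym2 V)) (x : V) : Prop :=
  T ⊆ A ∧ T.Nonempty ∧ T.card ≤ k ∧ edeg T x = 1 ∧
  (∀ v, v ≠ x → (∀ f ∈ A, v ∈ f → f ∈ T) ∨ (∀ f ∈ T, v ∉ f)) ∧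
  (∃ w, w ≠ x ∧ edeg A w = 1 ∧ edeg T w = 1 ∧ (∀ f ∈ A, w ∈ f → f ∈ T)) ∧
  (bd k γ A x = 0 → 3 ≤ edeg A x)

lemma IsThread.of_mir {A T : Finset (Sym2 V)} {x : V}
    (h : IsThread k (mir γ) A T x) : IsThread k γ A T x := by
  obtain ⟨h1, h2, h3, h4, h5, h6, h7⟩ := h
  exact ⟨h1, h2, h3, h4, h5, h6, fun hz => h7 (bd_mir_eq_zero.2 hz)⟩

lemma filter_pair_of_edeg_two {A : Finset (Sym2 V)} {x : V} (h : edeg A x = 2)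
    {f g : Sym2 V} (hf : f ∈ A) (hxf : x ∈ f) (hg : g ∈ A) (hxg : x ∈ g) (hfg : f ≠ g) :
    A.filter (fun e => x ∈ e) = {f, g} := by
  apply Finset.eq_of_superset_of_card_ge
  · intro e he
    rcases Finset.mem_insert.1 he with rfl | he
    · exact Finset.mem_filter.2 ⟨hf, hxf⟩
    · rw [Finset.mem_singleton] at he
      subst he
      exact Finset.mem_filter.2 ⟨hg, hxg⟩
  · rw [Finset.card_pair hfg]
    exact le_of_eq h

/-- The unique edge at a degree-one vertex of `T`. -/
lemma edeg_one_filter {T : Finset (Sym2 V)} {x : V} (h : edeg T x = 1) {f : Sym2 V}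
    (hf : f ∈ T) (hxf : x ∈ f) : T.filter (fun e => x ∈ e) = {f} := by
  apply Finset.eq_of_superset_of_card_ge
  · intro e he
    rw [Finset.mem_singleton] at he
    subst he
    exact Finset.mem_filter.2 ⟨hf, hxf⟩
  · rw [Finset.card_singleton]
    exact le_of_eq h

lemma thread_up (hk : 3 ≤ k) {A : Finset (Sym2 V)} (hprop : Proper k γ A) {w t : V}
    (hw : edeg A w = 1) (hwt : s(w,t) ∈ A) (hcol : γ w < γ t) :
    ∃ T x, IsThread k γ A T x := by
  have hwmem : s(w,t) ∈ A.filter (fun e => w ∈ e) := Finset.mem_filter.2 ⟨hwt, by simp⟩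
  have hwfilter : A.filter (fun e => w ∈ e) = {s(w,t)} := edeg_one_filter hw hwt (by simp)
  have hwne : w ≠ t := (hprop _ hwt w t rfl).1
  -- main recursion
  have key : ∀ (m : ℕ) (x : V) (T : Finset (Sym2 V)), T ⊆ A → T.Nonempty →
      edeg T x = 1 →
      (∀ v, v ≠ x → (∀ f ∈ A, v ∈ f → f ∈ T) ∨ (∀ f ∈ T, v ∉ f)) →
      (∃ y, s(y,x) ∈ T ∧ γ y < γ x) → T.card ≤ (γ x : ℕ) →
      (w ≠ x ∧ edeg T w = 1 ∧ (∀ f ∈ A, w ∈ f → f ∈ T)) →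
      (k + 1 - (γ x : ℕ)) ≤ m → ∃ T' x', IsThread k γ A T' x' := by
    intro m
    induction m with
    | zero =>
      intro x T _ _ _ _ _ _ _ hm
      exfalso
      have := (γ x).isLt
      omega
    | succ m ih =>
      intro x T hTA hTne hTx hdich hy hcard hwcond hm
      by_cases hstop : bd k γ A x = 0 ∧ edeg A x = 2
      · -- continue the thread
        obtain ⟨hbd0, hdeg2⟩ := hstop
        obtain ⟨y, hyT, hylt⟩ := hy
        have hyA : s(y,x) ∈ A := hTA hyT
        have hfx : T.filter (fun e => x ∈ e) = {s(y,x)} := edeg_one_filter hTx hyT (by simp)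
        -- second A-edge at x
        have h2 : 1 < (A.filter (fun e => x ∈ e)).card := by rw [← edeg] at *; omega
        obtain ⟨f', hf'mem, hf'ne⟩ := Finset.exists_mem_ne h2 (s(y,x))
        rw [Finset.mem_filter] at hf'mem
        obtain ⟨hf'A, hxf'⟩ := hf'mem
        have hf'T : f' ∉ T := by
          intro hmem
          have : f' ∈ T.filter (fun e => x ∈ e) := Finset.mem_filter.2 ⟨hmem, hxf'⟩
          rw [hfx, Finset.mem_singleton] at this
          exact hf'ne this
        set z := Sym2.Mem.other' hxf' with hzdef
        have hrep : s(x, z) = f' := Sym2.other_spec' hxf'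
        obtain ⟨hxz, hcolxz⟩ := hprop f' hf'A x z hrep.symm
        -- boundary at x determines orientation of f'
        have hpair : A.filter (fun e => x ∈ e) = {s(y,x), f'} :=
          filter_pair_of_edeg_two hdeg2 hyA (by simp) hf'A hxf' (fun hh => hf'ne hh.symm)
        have hbdsum : bd k γ A x = inc k γ s(y,x) x + inc k γ f' x := by
          rw [bd_eq_sum_filter, hpair, Finset.sum_insert (by simpa using hf'ne ∘ Eq.symm),
            Finset.sum_singleton]
        have hincy : inc k γ s(y,x) x = 1 := by
          rw [inc_right (hprop _ hyA y x rfl).2 (hprop _ hyA y x rfl).1, if_pos hylt]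
        have hincf' : inc k γ f' x = -1 := by
          have := hbd0
          rw [hbdsum, hincy] at this
          linear_combination this
        have hzup : γ x < γ z := by
          by_contra hcon
          have : inc k γ f' x = 1 := by
            rw [← hrep, inc_left hcolxz hxz, if_neg hcon]
          rw [this] at hincf'
          exact two_ne_zero' hk (by linear_combination hincf')
        -- set up the new state
        have hzx : z ≠ x := Ne.symm hxz
        have hzT : ∀ f ∈ T, z ∉ f := by
          rcases hdich z hzx with hall | hnone
          · exfalso
            exact hf'T (hall f' hf'A (by rw [← hrep]; simp))
          · exact hnone
        have hwz : w ≠ z := by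
          intro hwz
          subst hwz
          exact hf'T (hwcond.2.2 f' hf'A (by rw [← hrep]; simp))
        refine ih z (insert f' T) ?_ ?_ ?_ ?_ ?_ ?_ ?_ ?_
        · exact Finset.insert_subset hf'A hTA
        · exact Finset.insert_nonempty _ _
        · -- edeg (insert f' T) z = 1
          rw [edeg, Finset.filter_insert, if_pos (by rw [← hrep]; simp)]
          rw [Finset.card_insert_of_notMem, Finset.card_eq_zero.2, Nat.zero_add]
          · rw [Finset.filter_eq_empty_iff]
            exact fun f hf => hzT f hf
          · intro hmem
            exact hf'T (Finset.mem_filter.1 hmem).1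
        · -- dichotomy for insert f' T
          intro v hvz
          by_cases hvx : v = x
          · subst hvx
            left
            intro f hfA hvf
            have : f ∈ A.filter (fun e => v ∈ e) := Finset.mem_filter.2 ⟨hfA, hvf⟩
            rw [hpair] at this
            rcases Finset.mem_insert.1 this with rfl | hfs
            · exact Finset.mem_insert_of_mem hyT
            · rw [Finset.mem_singleton] at hfs
              subst hfs
              exact Finset.mem_insert_self _ _
          · rcases hdich v hvx with hall | hnone
            · left
              exact fun f hfA hvf => Finset.mem_insert_of_mem (hall f hfA hvf)
            · right
              intro f hfT
              rcases Finset.mem_insert.1 hfT with rfl | hfT'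
              · rw [← hrep]
                simp only [Sym2.mem_iff]
                push_neg
                exact ⟨hvx, hvz⟩
              · exact hnone f hfT'
        · exact ⟨x, by rw [← hrep] at *; exact Finset.mem_insert_self _ _, hzup⟩
        · rw [Finset.card_insert_of_notMem hf'T]
          have : (γ x : ℕ) < (γ z : ℕ) := hzup
          omega
        · refine ⟨hwz, ?_, ?_⟩
          · rw [edeg, Finset.filter_insert, if_neg, ← edeg, hwcond.2.1]
            rw [← hrep]
            simp only [Sym2.mem_iff]
            push_neg
            refine ⟨?_, hwz⟩
            intro hwx
            exact hwcond.1 hwx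
          · intro f hfA hwf
            exact Finset.mem_insert_of_mem (hwcond.2.2 f hfA hwf)
        · have : (γ x : ℕ) < (γ z : ℕ) := hzup
          have := (γ z).isLt
          omega
      · -- stop: this is a thread
        refine ⟨T, x, hTA, hTne, le_trans hcard (by have := (γ x).isLt; omega), hTx,
          hdich, ⟨w, hwcond.1, hw, hwcond.2.1, hwcond.2.2⟩, ?_⟩
        intro hbd0
        have hne2 : edeg A x ≠ 2 := fun h2 => hstop ⟨hbd0, h2⟩
        have hge1 : 1 ≤ edeg A x := by
          have hpos : 0 < edeg T x := by omega
          obtain ⟨f, hf⟩ := Finset.card_pos.1 hpos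
          rw [Finset.mem_filter] at hf
          exact Finset.card_pos.2 ⟨f, Finset.mem_filter.2 ⟨hTA hf.1, hf.2⟩⟩
        have hne1 : edeg A x ≠ 1 := by
          intro h1
          exact bd_of_leaf hk hprop h1 hbd0
        omega
  refine key (k+1) t {s(w,t)} (by simpa using hwt) (Finset.singleton_nonempty _) ?_ ?_ ?_ ?_ ?_ ?_
  · rw [edeg, Finset.filter_singleton, if_pos (by simp), Finset.card_singleton]
  · intro v hvt
    by_cases hvw : v = w
    · subst hvw
      left
      intro f hfA hvf
      have : f ∈ A.filter (fun e => v ∈ e) := Finset.mem_filter.2 ⟨hfA, hvf⟩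
      rw [hwfilter] at this
      simpa using this
    · right
      intro f hfT
      rw [Finset.mem_singleton] at hfT
      subst hfT
      simp only [Sym2.mem_iff]
      push_neg
      exact ⟨hvw, hvt⟩
  · exact ⟨w, Finset.mem_singleton_self _, hcol⟩
  · rw [Finset.card_singleton]
    have : (γ w : ℕ) < (γ t : ℕ) := hcol
    omega
  · refine ⟨hwne, ?_, ?_⟩
    · rw [edeg, Finset.filter_singleton, if_pos (by simp), Finset.card_singleton]
    · intro f hfA hwf
      have : f ∈ A.filter (fun e => w ∈ e) := Finset.mem_filter.2 ⟨hfA, hwf⟩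
      rw [hwfilter] at this
      simpa using this
  · omega

end Thread

/-! ### Potential and stripping -/

section Strip

variable {k : ℕ} {γ : V → Fin (k+1)}

/-- charged vertices -/
def chS (k : ℕ) (γ : V → Fin (k+1)) (A : Finset (Sym2 V)) : Finset V :=
  Finset.univ.filter (fun v => bd k γ A v ≠ 0)

/-- uncharged branch vertices -/
def brS (k : ℕ) (γ : V → Fin (k+1)) (A : Finset (Sym2 V)) : Finset V :=
  Finset.univ.filter (fun v => bd k γ A v = 0 ∧ 3 ≤ edeg A v)

def Pot (k : ℕ) (γ : V → Fin (k+1)) (A : Finset (Sym2 V)) : ℕ :=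
  2 * (chS k γ A).card + (brS k γ A).card

lemma chS_mir (A : Finset (Sym2 V)) : chS k (mir γ) A = chS k γ A := by
  apply Finset.filter_congr
  intro v _
  simp [bd_mir_eq_zero]

lemma brS_mir (A : Finset (Sym2 V)) : brS k (mir γ) A = brS k γ A := by
  apply Finset.filter_congr
  intro v _
  simp [bd_mir_eq_zero]

lemma Pot_mir (A : Finset (Sym2 V)) : Pot k (mir γ) A = Pot k γ A := by
  rw [Pot, Pot, chS_mir, brS_mir]

lemma bd_sdiff {A T : Finset (Sym2 V)} (hTA : T ⊆ A) (v : V) :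
    bd k γ (A \ T) v = bd k γ A v - bd k γ T v := by
  rw [eq_sub_iff_add_eq, bd, bd, bd, Finset.sum_sdiff hTA]

lemma edeg_sdiff {A T : Finset (Sym2 V)} (hTA : T ⊆ A) (v : V) :
    edeg (A \ T) v = edeg A v - edeg T v := by
  rw [edeg, edeg, edeg]
  have h : (A \ T).filter (fun f => v ∈ f)
      = A.filter (fun f => v ∈ f) \ T.filter (fun f => v ∈ f) := by
    ext f
    simp only [Finset.mem_filter, Finset.mem_sdiff]
    tauto
  rw [h, Finset.card_sdiff_of_subset (Finset.filter_subset_filter _ hTA)]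

lemma bd_of_untouched {T : Finset (Sym2 V)} {v : V} (h : ∀ f ∈ T, v ∉ f) :
    bd k γ T v = 0 :=
  Finset.sum_eq_zero fun f hf => inc_of_not_mem (h f hf)

lemma edeg_of_untouched {T : Finset (Sym2 V)} {v : V} (h : ∀ f ∈ T, v ∉ f) :
    edeg T v = 0 := by
  rw [edeg, Finset.card_eq_zero, Finset.filter_eq_empty_iff]
  exact fun f hf => h f hf

lemma bd_of_consumed {A T : Finset (Sym2 V)} (hTA : T ⊆ A) {v : V}
    (h : ∀ f ∈ A, v ∈ f → f ∈ T) : bd k γ (A \ T) v = 0 := by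
  apply Finset.sum_eq_zero
  intro f hf
  rw [Finset.mem_sdiff] at hf
  apply inc_of_not_mem
  intro hv
  exact hf.2 (h f hf.1 hv)

lemma edeg_of_consumed {A T : Finset (Sym2 V)} {v : V}
    (h : ∀ f ∈ A, v ∈ f → f ∈ T) : edeg (A \ T) v = 0 := by
  rw [edeg, Finset.card_eq_zero, Finset.filter_eq_empty_iff]
  intro f hf hv
  rw [Finset.mem_sdiff] at hf
  exact hf.2 (h f hf.1 hv)

lemma strip_bound (hk : 3 ≤ k) {A T : Finset (Sym2 V)} (hprop : Proper k γ A) {x : V}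
    (hT : IsThread k γ A T x) :
    (A \ T).card + T.card = A.card ∧ Pot k γ (A \ T) + 1 ≤ Pot k γ A := by
  obtain ⟨hTA, hTne, hTk, hTx, hdich, ⟨w, hwx, hwA, hwT, hwcons⟩, hbr⟩ := hT
  constructor
  · rw [Finset.card_sdiff_of_subset hTA]
    have := Finset.card_le_card hTA
    omega
  -- the unique T-edge at x
  have hxe : ∃ fx, T.filter (fun e => x ∈ e) = {fx} := Finset.card_eq_one.1 hTx
  obtain ⟨fx, hfx⟩ := hxe
  have hfxT : fx ∈ T ∧ x ∈ fx := by
    have : fx ∈ T.filter (fun e => x ∈ e) := hfx ▸ Finset.mem_singleton_self fx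
    exact ⟨(Finset.mem_filter.1 this).1, (Finset.mem_filter.1 this).2⟩
  have hbdTx : bd k γ T x = inc k γ fx x := by
    rw [bd_eq_sum_filter, hfx, Finset.sum_singleton]
  have hincx : inc k γ fx x = 1 ∨ inc k γ fx x = -1 :=
    inc_pm hk hprop (hTA hfxT.1) hfxT.2
  have hbdx' : bd k γ (A \ T) x = bd k γ A x - inc k γ fx x := by
    rw [bd_sdiff hTA, hbdTx]
  -- w is charged and consumed
  have hwch : bd k γ A w ≠ 0 := bd_of_leaf hk hprop hwA
  have hwgone : bd k γ (A \ T) w = 0 := bd_of_consumed hTA hwcons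
  have hwmem : w ∈ chS k γ A := Finset.mem_filter.2 ⟨Finset.mem_univ _, hwch⟩
  by_cases hx0 : bd k γ A x = 0
  · -- x was an uncharged branch vertex
    have hxbr : x ∈ brS k γ A := Finset.mem_filter.2 ⟨Finset.mem_univ _, hx0, hbr hx0⟩
    have hxch' : bd k γ (A \ T) x ≠ 0 := by
      rw [hbdx', hx0, zero_sub, neg_ne_zero]
      rcases hincx with h | h <;> rw [h]
      · exact one_ne_zero' hk
      · exact neg_one_ne_zero' hk
    have hch : chS k γ (A \ T) ⊆ insert x ((chS k γ A).erase w) := by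
      intro v hv
      rw [chS, Finset.mem_filter] at hv
      by_cases hvx : v = x
      · exact hvx ▸ Finset.mem_insert_self _ _
      · apply Finset.mem_insert_of_mem
        rcases hdich v hvx with hcons | hunt
        · exfalso
          exact hv.2 (bd_of_consumed hTA hcons)
        · have hbv : bd k γ (A \ T) v = bd k γ A v := by
            rw [bd_sdiff hTA, bd_of_untouched hunt, sub_zero]
          have hvw : v ≠ w := by
            intro hvw
            subst hvw
            exact hv.2 hwgone
          exact Finset.mem_erase.2 ⟨hvw, Finset.mem_filter.2 ⟨Finset.mem_univ _, hbv ▸ hv.2⟩⟩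
    have hbrsub : brS k γ (A \ T) ⊆ (brS k γ A).erase x := by
      intro v hv
      rw [brS, Finset.mem_filter] at hv
      have hvx : v ≠ x := by
        intro hvx
        subst hvx
        exact hxch' hv.2.1
      rcases hdich v hvx with hcons | hunt
      · exfalso
        have := edeg_of_consumed (T := T) hcons
        omega
      · have hbv : bd k γ (A \ T) v = bd k γ A v := by
          rw [bd_sdiff hTA, bd_of_untouched hunt, sub_zero]
        have hdv : edeg (A \ T) v = edeg A v := by
          rw [edeg_sdiff hTA, edeg_of_untouched hunt, Nat.sub_zero]
        exact Finset.mem_erase.2 ⟨hvx,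
          Finset.mem_filter.2 ⟨Finset.mem_univ _, hbv ▸ hv.2.1, hdv ▸ hv.2.2⟩⟩
    have h1 : (chS k γ (A \ T)).card ≤ (chS k γ A).card := by
      have ha := Finset.card_le_card hch
      have hb := Finset.card_insert_le x ((chS k γ A).erase w)
      have hc := Finset.card_erase_of_mem hwmem
      have hd : 1 ≤ (chS k γ A).card := Finset.card_pos.2 ⟨w, hwmem⟩
      omega
    have h2 : (brS k γ (A \ T)).card + 1 ≤ (brS k γ A).card := by
      have ha := Finset.card_le_card hbrsub
      have hc := Finset.card_erase_of_mem hxbr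
      have hd : 1 ≤ (brS k γ A).card := Finset.card_pos.2 ⟨x, hxbr⟩
      omega
    rw [Pot, Pot]
    omega
  · -- x was charged
    have hxch : x ∈ chS k γ A := Finset.mem_filter.2 ⟨Finset.mem_univ _, hx0⟩
    have hch : chS k γ (A \ T) ⊆ (chS k γ A).erase w := by
      intro v hv
      rw [chS, Finset.mem_filter] at hv
      by_cases hvx : v = x
      · subst hvx
        exact Finset.mem_erase.2 ⟨fun h => hwx h.symm, hxch⟩
      · rcases hdich v hvx with hcons | hunt
        · exfalso
          exact hv.2 (bd_of_consumed hTA hcons)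
        · have hbv : bd k γ (A \ T) v = bd k γ A v := by
            rw [bd_sdiff hTA, bd_of_untouched hunt, sub_zero]
          have hvw : v ≠ w := by
            intro hvw
            subst hvw
            exact hv.2 hwgone
          exact Finset.mem_erase.2 ⟨hvw, Finset.mem_filter.2 ⟨Finset.mem_univ _, hbv ▸ hv.2⟩⟩
    have hbrsub : brS k γ (A \ T) ⊆ insert x (brS k γ A) := by
      intro v hv
      rw [brS, Finset.mem_filter] at hv
      by_cases hvx : v = x
      · exact hvx ▸ Finset.mem_insert_self _ _
      · apply Finset.mem_insert_of_mem
        rcases hdich v hvx with hcons | hunt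
        · exfalso
          have := edeg_of_consumed (T := T) hcons
          omega
        · have hbv : bd k γ (A \ T) v = bd k γ A v := by
            rw [bd_sdiff hTA, bd_of_untouched hunt, sub_zero]
          have hdv : edeg (A \ T) v = edeg A v := by
            rw [edeg_sdiff hTA, edeg_of_untouched hunt, Nat.sub_zero]
          exact Finset.mem_filter.2 ⟨Finset.mem_univ _, hbv ▸ hv.2.1, hdv ▸ hv.2.2⟩
    have h1 : (chS k γ (A \ T)).card + 1 ≤ (chS k γ A).card := by
      have := Finset.card_le_card hch
      rw [Finset.card_erase_of_mem hwmem] at this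
      have h0 : 1 ≤ (chS k γ A).card := Finset.card_pos.2 ⟨w, hwmem⟩
      omega
    have h2 : (brS k γ (A \ T)).card ≤ (brS k γ A).card + 1 := by
      have := Finset.card_le_card hbrsub
      have := Finset.card_insert_le x (brS k γ A)
      omega
    rw [Pot, Pot]
    omega

end Strip

/-! ### The size bound -/

section SizeBound

variable {k : ℕ} {γ : V → Fin (k+1)}

/-- a good, properly colored edge set has at most `k·Pot` edges -/
lemma card_le_k_mul_pot (hk : 3 ≤ k) :
    ∀ (n : ℕ) (A : Finset (Sym2 V)), A.card = n → Proper k γ A → Good A →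
      A.card ≤ k * Pot k γ A := by
  intro n
  induction n using Nat.strong_induction_on with
  | _ n ih =>
    intro A hcard hprop hGood
    rcases Finset.eq_empty_or_nonempty A with rfl | hne
    · simp
    -- get a leaf
    obtain ⟨w, hw⟩ := hGood A (Finset.mem_powerset.2 (le_refl A)) hne
    have hpos : 0 < edeg A w := by omega
    obtain ⟨f0, hf0⟩ := Finset.card_pos.1 hpos
    rw [Finset.mem_filter] at hf0
    obtain ⟨hf0A, hwf0⟩ := hf0
    set t := Sym2.Mem.other' hwf0 with htdef
    have hrep : s(w, t) = f0 := Sym2.other_spec' hwf0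
    obtain ⟨hwt, hcolwt⟩ := hprop f0 hf0A w t hrep.symm
    have hf0A' : s(w,t) ∈ A := by rw [hrep]; exact hf0A
    -- find a thread
    have hthread : ∃ T x, IsThread k γ A T x := by
      rcases hcolwt.lt_or_gt with hlt | hlt
      · exact thread_up hk hprop hw hf0A' hlt
      · obtain ⟨T, x, hT⟩ := thread_up (γ := mir γ) hk hprop.mir hw hf0A' (mir_lt.2 hlt)
        exact ⟨T, x, hT.of_mir⟩
    obtain ⟨T, x, hT⟩ := hthread
    obtain ⟨hsum, hpot⟩ := strip_bound hk hprop hT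
    have hTpos : 0 < T.card := Finset.card_pos.2 hT.2.1
    have hTk : T.card ≤ k := hT.2.2.1
    have hless : (A \ T).card < n := by omega
    have hrec := ih _ hless (A \ T) rfl (hprop.subset (Finset.sdiff_subset))
      (hGood.subset (Finset.sdiff_subset))
    have hkpos : 0 < k := by omega
    calc A.card = (A \ T).card + T.card := hsum.symm
    _ ≤ k * Pot k γ (A \ T) + k := by omega
    _ = k * (Pot k γ (A \ T) + 1) := by ring
    _ ≤ k * Pot k γ A := Nat.mul_le_mul_left k hpot

/-- touched vertices -/
def tch (A : Finset (Sym2 V)) : Finset V := Finset.univ.filter (fun v => 1 ≤ edeg A v)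

lemma card_tch (hk : 3 ≤ k) : ∀ (n : ℕ) (A : Finset (Sym2 V)), A.card = n →
    Proper k γ A → Good A → A.Nonempty → A.card + 1 ≤ (tch A).card := by
  intro n
  induction n using Nat.strong_induction_on with
  | _ n ih =>
    intro A hcard hprop hGood hne
    obtain ⟨w, hw⟩ := hGood A (Finset.mem_powerset.2 (le_refl A)) hne
    have hpos : 0 < edeg A w := by omega
    obtain ⟨f0, hf0⟩ := Finset.card_pos.1 hpos
    rw [Finset.mem_filter] at hf0
    obtain ⟨hf0A, hwf0⟩ := hf0
    set t := Sym2.Mem.other' hwf0 with htdef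
    have hrep : s(w, t) = f0 := Sym2.other_spec' hwf0
    obtain ⟨hwt, _⟩ := hprop f0 hf0A w t hrep.symm
    have hwfilter : A.filter (fun e => w ∈ e) = {f0} := edeg_one_filter hw hf0A hwf0
    set A' := A.erase f0 with hA'def
    have hA'sub : A' ⊆ A := Finset.erase_subset _ _
    have hwA' : edeg A' w = 0 := by
      rw [edeg, Finset.card_eq_zero, Finset.filter_eq_empty_iff]
      intro f hf hwf
      have : f ∈ A.filter (fun e => w ∈ e) :=
        Finset.mem_filter.2 ⟨Finset.mem_of_mem_erase hf, hwf⟩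
      rw [hwfilter, Finset.mem_singleton] at this
      subst this
      exact absurd rfl (Finset.ne_of_mem_erase hf)
    have hwtch : w ∈ tch A := Finset.mem_filter.2 ⟨Finset.mem_univ _, hpos⟩
    have hwntch : w ∉ tch A' := by
      rw [tch, Finset.mem_filter]
      push_neg
      intro _
      omega
    have hsub : tch A' ⊆ tch A := by
      intro v hv
      rw [tch, Finset.mem_filter] at hv ⊢
      refine ⟨Finset.mem_univ _, ?_⟩
      have : edeg A' v ≤ edeg A v := Finset.card_le_card (Finset.filter_subset_filter _ hA'sub)
      omega
    have hcard' : A'.card + 1 = A.card := by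
      rw [hA'def, Finset.card_erase_of_mem hf0A]
      have : 1 ≤ A.card := Finset.card_pos.2 ⟨f0, hf0A⟩
      omega
    rcases Finset.eq_empty_or_nonempty A' with hA'emp | hA'ne
    · -- A = {f0}
      have hAcard : A.card = 1 := by
        rw [hA'emp] at hcard'
        simpa using hcard'.symm
      have httch : t ∈ tch A := by
        refine Finset.mem_filter.2 ⟨Finset.mem_univ _, ?_⟩
        apply Finset.card_pos.2
        exact ⟨f0, Finset.mem_filter.2 ⟨hf0A, by rw [← hrep]; simp⟩⟩
      have : ({w, t} : Finset V) ⊆ tch A := by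
        intro v hv
        rcases Finset.mem_insert.1 hv with rfl | hv
        · exact hwtch
        · rw [Finset.mem_singleton] at hv
          subst hv
          exact httch
      have h2 := Finset.card_le_card this
      rw [Finset.card_pair hwt] at h2
      omega
    · have hrecn : A'.card < n := by omega
      have hrec := ih _ hrecn A' rfl (hprop.subset hA'sub) (hGood.subset hA'sub) hA'ne
      have : (tch A').card + 1 ≤ (tch A).card := by
        have h3 : insert w (tch A') ⊆ tch A :=
          Finset.insert_subset hwtch hsub
        have h4 := Finset.card_le_card h3
        rw [Finset.card_insert_of_notMem hwntch] at h4
        omega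
      omega

lemma sum_edeg {A : Finset (Sym2 V)} (hprop : Proper k γ A) :
    ∑ v : V, edeg A v = 2 * A.card := by
  have h1 : ∀ v : V, edeg A v = ∑ f ∈ A, if v ∈ f then 1 else 0 := by
    intro v
    rw [edeg, Finset.card_filter]
  calc ∑ v : V, edeg A v = ∑ v : V, ∑ f ∈ A, if v ∈ f then 1 else 0 := by
        exact Finset.sum_congr rfl fun v _ => h1 v
  _ = ∑ f ∈ A, ∑ v : V, if v ∈ f then 1 else 0 := Finset.sum_comm
  _ = ∑ f ∈ A, 2 := by
      apply Finset.sum_congr rfl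
      intro f hf
      rw [← Finset.card_filter]
      induction f using Sym2.inductionOn with
      | hf x y =>
        have hxy : x ≠ y := (hprop _ hf x y rfl).1
        have : Finset.univ.filter (fun v => v ∈ s(x,y)) = {x, y} := by
          ext v
          simp [Sym2.mem_iff]
        rw [this, Finset.card_pair hxy]
  _ = 2 * A.card := by rw [Finset.sum_const, smul_eq_mul, mul_comm]

lemma brS_card_le (hk : 3 ≤ k) {A : Finset (Sym2 V)} (hprop : Proper k γ A)
    (hGood : Good A) : (brS k γ A).card ≤ (chS k γ A).card := by
  rcases Finset.eq_empty_or_nonempty A with rfl | hne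
  · have : brS k γ (∅ : Finset (Sym2 V)) = ∅ := by
      rw [brS, Finset.filter_eq_empty_iff]
      intro v _
      rw [edeg]
      simp
    simp [this]
  set S := tch A with hSdef
  set L := Finset.univ.filter (fun v => edeg A v = 1) with hLdef
  set B := brS k γ A with hBdef
  have hLS : L ⊆ S := by
    intro v hv
    rw [hLdef, Finset.mem_filter] at hv
    exact Finset.mem_filter.2 ⟨Finset.mem_univ _, by omega⟩
  have hBS : B ⊆ S := by
    intro v hv
    rw [hBdef, brS, Finset.mem_filter] at hv
    exact Finset.mem_filter.2 ⟨Finset.mem_univ _, by omega⟩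
  have hBL : ∀ v ∈ B, v ∉ L := by
    intro v hv hvL
    rw [hBdef, brS, Finset.mem_filter] at hv
    rw [hLdef, Finset.mem_filter] at hvL
    omega
  have hsum : ∑ v ∈ S, edeg A v = 2 * A.card := by
    rw [← sum_edeg hprop]
    apply Finset.sum_subset (Finset.subset_univ _)
    intro v _ hv
    rw [hSdef, tch, Finset.mem_filter] at hv
    push_neg at hv
    have := hv (Finset.mem_univ _)
    omega
  have hSA : A.card + 1 ≤ S.card := card_tch hk A.card A rfl hprop hGood hne
  -- decompose the sum
  have hsplit1 : ∑ v ∈ S \ L, edeg A v + ∑ v ∈ L, edeg A v = ∑ v ∈ S, edeg A v :=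
    Finset.sum_sdiff hLS
  have hBSL : B ⊆ S \ L := by
    intro v hv
    exact Finset.mem_sdiff.2 ⟨hBS hv, hBL v hv⟩
  have hsplit2 : ∑ v ∈ (S \ L) \ B, edeg A v + ∑ v ∈ B, edeg A v
      = ∑ v ∈ S \ L, edeg A v := Finset.sum_sdiff hBSL
  have hLsum : ∑ v ∈ L, edeg A v = L.card := by
    rw [Finset.card_eq_sum_ones]
    apply Finset.sum_congr rfl
    intro v hv
    rw [hLdef, Finset.mem_filter] at hv
    exact hv.2
  have hBsum : 3 * B.card ≤ ∑ v ∈ B, edeg A v := by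
    rw [Finset.card_eq_sum_ones, Finset.mul_sum]
    apply Finset.sum_le_sum
    intro v hv
    rw [hBdef, brS, Finset.mem_filter] at hv
    omega
  have hRsum : 2 * ((S \ L) \ B).card ≤ ∑ v ∈ (S \ L) \ B, edeg A v := by
    rw [Finset.card_eq_sum_ones, Finset.mul_sum]
    apply Finset.sum_le_sum
    intro v hv
    rw [Finset.mem_sdiff, Finset.mem_sdiff] at hv
    have h1 : 1 ≤ edeg A v := by
      have := hv.1.1
      rw [hSdef, tch, Finset.mem_filter] at this
      exact this.2
    have h2 : edeg A v ≠ 1 := by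
      intro h
      exact hv.1.2 (by rw [hLdef]; exact Finset.mem_filter.2 ⟨Finset.mem_univ _, h⟩)
    omega
  have hcard1 : ((S \ L) \ B).card = S.card - L.card - B.card := by
    rw [Finset.card_sdiff_of_subset hBSL, Finset.card_sdiff_of_subset hLS]
  have hLB : L.card + B.card ≤ S.card := by
    have := Finset.card_le_card hBSL
    rw [Finset.card_sdiff_of_subset hLS] at this
    have := Finset.card_le_card hLS
    omega
  -- conclude B ≤ L − 2 ≤ L
  have hLbound : B.card + 2 ≤ L.card := by omega
  have hLC : L ⊆ chS k γ A := by
    intro v hv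
    rw [hLdef, Finset.mem_filter] at hv
    exact Finset.mem_filter.2 ⟨Finset.mem_univ _, bd_of_leaf hk hprop hv.2⟩
  have := Finset.card_le_card hLC
  omega

/-- Master bound: a good properly-colored edge set has at most `3k·(#charged)` edges. -/
lemma good_card_le (hk : 3 ≤ k) {A : Finset (Sym2 V)} (hprop : Proper k γ A)
    (hGood : Good A) : A.card ≤ k * (3 * (chS k γ A).card) := by
  have h1 := card_le_k_mul_pot (γ := γ) hk A.card A rfl hprop hGood
  have h2 := brS_card_le hk hprop hGood
  rw [Pot] at h1
  have : 2 * (chS k γ A).card + (brS k γ A).card ≤ 3 * (chS k γ A).card := by omega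
  calc A.card ≤ k * (2 * (chS k γ A).card + (brS k γ A).card) := h1
  _ ≤ k * (3 * (chS k γ A).card) := Nat.mul_le_mul_left k this

end SizeBound

/-! ### The dual weight Φ -/

section Phi

variable {k : ℕ} {γ : V → Fin (k+1)} {G : SimpleGraph V} [DecidableRel G.Adj]

instance decidableGood (A : Finset (Sym2 V)) : Decidable (Good A) := by
  unfold Good
  infer_instance

/-- the family of good edge sets with boundary `j` -/
def famF (G : SimpleGraph V) [DecidableRel G.Adj] (k : ℕ) (γ : V → Fin (k+1))
    (j : V → ZMod k) : Finset (Finset (Sym2 V)) :=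
  G.edgeFinset.powerset.filter (fun A => Good A ∧ bd k γ A = j)

/-- the dual weight -/
def Phi (K : Type*) [CommRing K] (G : SimpleGraph V) [DecidableRel G.Adj] (k : ℕ)
    (γ : V → Fin (k+1)) (j : V → ZMod k) : K :=
  ∑ A ∈ famF G k γ j, (-1 : K) ^ A.card

lemma proper_of_subset_edgeFinset (hγ : ∀ ⦃x y⦄, G.Adj x y → γ x ≠ γ y)
    {A : Finset (Sym2 V)} (hA : A ⊆ G.edgeFinset) : Proper k γ A := by
  intro f hf x y hxy
  have : f ∈ G.edgeSet := SimpleGraph.mem_edgeFinset.1 (hA hf)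
  rw [hxy, SimpleGraph.mem_edgeSet] at this
  exact ⟨this.ne, hγ this⟩

lemma Phi_zero {K : Type*} [CommRing K] (hk : 3 ≤ k)
    (hγ : ∀ ⦃x y⦄, G.Adj x y → γ x ≠ γ y) :
    Phi K G k γ (fun _ => 0) = 1 := by
  have hfam : famF G k γ (fun _ => 0) = {∅} := by
    ext A
    rw [famF, Finset.mem_filter, Finset.mem_singleton]
    constructor
    · rintro ⟨hsub, hGood, hbd⟩
      by_contra hne
      obtain ⟨w, hw⟩ := hGood A (Finset.mem_powerset.2 le_rfl)
        (Finset.nonempty_iff_ne_empty.2 hne)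
      have hprop := proper_of_subset_edgeFinset hγ (Finset.mem_powerset.1 hsub)
      exact bd_of_leaf hk hprop hw (congrFun hbd w)
    · rintro rfl
      refine ⟨Finset.mem_powerset.2 (Finset.empty_subset _), ?_, ?_⟩
      · intro B hB hBne
        rw [Finset.mem_powerset, Finset.subset_empty] at hB
        subst hB
        exact absurd hBne (by simp)
      · funext w
        rw [bd]
        simp
  rw [Phi, hfam, Finset.sum_singleton, Finset.card_empty, pow_zero]

/-- the dipole of an ordered pair -/
def dip (k : ℕ) (u v : V) : V → ZMod k :=
  fun w => (if w = v then 1 else 0) - (if w = u then 1 else 0)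

lemma dip_apply (k : ℕ) (u v w : V) :
    dip k u v w = (if w = v then 1 else 0) - (if w = u then 1 else 0) := rfl

lemma inc_dip {u v : V} (huv : u ≠ v) (hcol : γ u ≠ γ v) :
    inc k γ s(u,v) = dip k u v ∨ inc k γ s(u,v) = - dip k u v := by
  rcases hcol.lt_or_gt with h | h
  · left
    funext w
    rw [inc_mk, dip_apply]
    simp [h]
  · right
    funext w
    rw [inc_mk, Pi.neg_apply, dip_apply]
    simp [h, asymm h]

/-- The key involution identity. -/
lemma key_E {K : Type*} [CommRing K] (hk : 3 ≤ k) [NeZero k]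
    (hγ : ∀ ⦃x y⦄, G.Adj x y → γ x ≠ γ y)
    {u v : V} (hadj : G.Adj u v) (c : V → ZMod k) (W : ℕ)
    (hsupp : (Finset.univ.filter (fun w => c w ≠ 0) ∪ {u, v}).card ≤ W)
    (hgirth : ((3 * (k * W) + 1 : ℕ) : ℕ∞) < G.egirth) :
    ∑ ρ : ZMod k, Phi K G k γ (fun w => c w + ρ * dip k u v w) = 0 := by
  classical
  have huv : u ≠ v := hadj.ne
  -- the union family
  set U : Finset (Finset (Sym2 V)) :=
    Finset.univ.biUnion (fun ρ : ZMod k => famF G k γ (fun w => c w + ρ * dip k u v w))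
    with hU
  have hdisj : ∀ ρ₁ ∈ (Finset.univ : Finset (ZMod k)), ∀ ρ₂ ∈ Finset.univ, ρ₁ ≠ ρ₂ →
      Disjoint (famF G k γ (fun w => c w + ρ₁ * dip k u v w))
        (famF G k γ (fun w => c w + ρ₂ * dip k u v w)) := by
    intro ρ₁ _ ρ₂ _ hne
    rw [Finset.disjoint_left]
    intro A h1 h2
    rw [famF, Finset.mem_filter] at h1 h2
    have e1 := congrFun h1.2.2 v
    have e2 := congrFun h2.2.2 v
    apply hne
    have hdipv : dip k u v v = 1 := by
      rw [dip_apply, if_pos rfl, if_neg (Ne.symm huv), sub_zero]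
    rw [hdipv, mul_one] at e1 e2
    exact add_left_cancel (e1.symm.trans e2)
  simp only [Phi]
  rw [← Finset.sum_biUnion hdisj]
  -- the size bound for members
  have hsize : ∀ (A : Finset (Sym2 V)) (ρ : ZMod k),
      A ∈ famF G k γ (fun w => c w + ρ * dip k u v w) → A.card ≤ 3 * (k * W) := by
    intro A ρ hA
    rw [famF, Finset.mem_filter, Finset.mem_powerset] at hA
    obtain ⟨hsub, hGood, hbd⟩ := hA
    have hprop := proper_of_subset_edgeFinset hγ hsub
    have hch : chS k γ A ⊆ Finset.univ.filter (fun w => c w ≠ 0) ∪ {u, v} := by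
      intro w hw
      rw [chS, Finset.mem_filter] at hw
      by_cases hwu : w = u
      · subst hwu
        exact Finset.mem_union_right _ (by simp)
      by_cases hwv : w = v
      · subst hwv
        exact Finset.mem_union_right _ (by simp)
      apply Finset.mem_union_left
      rw [Finset.mem_filter]
      refine ⟨Finset.mem_univ _, ?_⟩
      intro hc0
      apply hw.2
      rw [congrFun hbd w, hc0, dip_apply, if_neg hwv, if_neg hwu, zero_add]
      ring
    have hchcard : (chS k γ A).card ≤ W := le_trans (Finset.card_le_card hch) hsupp
    calc A.card ≤ k * (3 * (chS k γ A).card) := good_card_le hk hprop hGood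
    _ ≤ k * (3 * W) := by
        apply Nat.mul_le_mul_left
        omega
    _ = 3 * (k * W) := by ring
  -- the involution: toggle the edge s(u,v)
  set e₀ : Sym2 V := s(u,v) with he₀
  have he₀E : e₀ ∈ G.edgeFinset := SimpleGraph.mem_edgeFinset.2 hadj
  have hdipinc : inc k γ e₀ = dip k u v ∨ inc k γ e₀ = - dip k u v :=
    inc_dip huv (hγ hadj)
  apply Finset.sum_involution
    (g := fun A _ => if e₀ ∈ A then A.erase e₀ else insert e₀ A)
  -- sums to zero
  case hg₁ =>
    intro A hA
    by_cases hmem : e₀ ∈ A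
    · rw [if_pos hmem, Finset.card_erase_of_mem hmem]
      have hpos : 1 ≤ A.card := Finset.card_pos.2 ⟨e₀, hmem⟩
      obtain ⟨n, hn⟩ : ∃ n, A.card = n + 1 := ⟨A.card - 1, by omega⟩
      rw [hn]
      simp [pow_succ]
    · rw [if_neg hmem, Finset.card_insert_of_notMem hmem, pow_succ]
      ring
  case hg₃ =>
    intro A hA _
    by_cases hmem : e₀ ∈ A
    · rw [if_pos hmem]
      intro h
      exact Finset.notMem_erase e₀ A (h.symm ▸ hmem)
    · rw [if_neg hmem]
      intro h
      exact hmem (h ▸ Finset.mem_insert_self e₀ A)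
  case g_mem =>
    intro A hA
    rw [Finset.mem_biUnion] at hA ⊢
    obtain ⟨ρ, _, hAmem⟩ := hA
    rw [famF, Finset.mem_filter, Finset.mem_powerset] at hAmem
    obtain ⟨hsub, hGood, hbd⟩ := hAmem
    by_cases hmem : e₀ ∈ A
    · rw [if_pos hmem]
      -- boundary changes by ∓ dip
      have herase : A.erase e₀ = A \ {e₀} := by
        rw [Finset.sdiff_singleton_eq_erase]
      have hbd' : ∀ w, bd k γ (A.erase e₀) w = bd k γ A w - inc k γ e₀ w := by
        intro w
        rw [herase, bd_sdiff (by simpa using hmem)]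
        congr 1
        rw [bd, Finset.sum_singleton]
      rcases hdipinc with hio | hio
      · refine ⟨ρ - 1, Finset.mem_univ _, ?_⟩
        rw [famF, Finset.mem_filter, Finset.mem_powerset]
        refine ⟨le_trans (Finset.erase_subset _ _) hsub, hGood.subset (Finset.erase_subset _ _), ?_⟩
        funext w
        rw [hbd' w, congrFun hbd w, hio]
        ring
      · refine ⟨ρ + 1, Finset.mem_univ _, ?_⟩
        rw [famF, Finset.mem_filter, Finset.mem_powerset]
        refine ⟨le_trans (Finset.erase_subset _ _) hsub, hGood.subset (Finset.erase_subset _ _), ?_⟩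
        funext w
        rw [hbd' w, congrFun hbd w, hio]
        simp only [Pi.neg_apply]
        ring
    · rw [if_neg hmem]
      have hbd' : ∀ w, bd k γ (insert e₀ A) w = inc k γ e₀ w + bd k γ A w := by
        intro w
        rw [bd, Finset.sum_insert hmem, bd]
      have hGood' : Good (insert e₀ A) := by
        intro B hB hBne
        apply exists_leaf_of_small (G := G)
        · intro f hf
          rcases Finset.mem_insert.1 ((Finset.mem_powerset.1 hB) hf) with rfl | hmem2
          · exact he₀E
          · exact hsub hmem2
        · exact hBne
        · have h1 : B.card ≤ A.card + 1 := by
            have := Finset.card_le_card (Finset.mem_powerset.1 hB)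
            have := Finset.card_insert_le e₀ A
            omega
          have h2 : A.card ≤ 3 * (k * W) := by
            apply hsize A ρ
            rw [famF, Finset.mem_filter, Finset.mem_powerset]
            exact ⟨hsub, hGood, hbd⟩
          have h3 : B.card ≤ 3 * (k * W) + 1 := by omega
          refine lt_of_le_of_lt ?_ hgirth
          exact_mod_cast h3
      rcases hdipinc with hio | hio
      · refine ⟨ρ + 1, Finset.mem_univ _, ?_⟩
        rw [famF, Finset.mem_filter, Finset.mem_powerset]
        refine ⟨Finset.insert_subset he₀E hsub, hGood', ?_⟩
        funext w
        rw [hbd' w, congrFun hbd w, hio]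
        ring
      · refine ⟨ρ - 1, Finset.mem_univ _, ?_⟩
        rw [famF, Finset.mem_filter, Finset.mem_powerset]
        refine ⟨Finset.insert_subset he₀E hsub, hGood', ?_⟩
        funext w
        rw [hbd' w, congrFun hbd w, hio]
        simp only [Pi.neg_apply]
        ring
  case hg₄ =>
    intro A hA
    by_cases hmem : e₀ ∈ A
    · rw [if_pos hmem, if_neg (Finset.notMem_erase e₀ A), Finset.insert_erase hmem]
    · rw [if_neg hmem, if_pos (Finset.mem_insert_self e₀ A), Finset.erase_insert hmem]

end Phi

/-! ### The linear functional on polynomials -/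

section Functional

open MvPolynomial

variable {K : Type*} [CommRing K]

/-- weighted sum of coefficients -/
noncomputable def wsum (g : (V →₀ ℕ) → K) (p : MvPolynomial V K) : K :=
  ∑ a ∈ p.support, p.coeff a * g a

lemma wsum_eq_sum_of_subset (g : (V →₀ ℕ) → K) {p : MvPolynomial V K}
    {s : Finset (V →₀ ℕ)} (h : p.support ⊆ s) :
    wsum g p = ∑ a ∈ s, p.coeff a * g a := by
  apply Finset.sum_subset h
  intro a _ ha
  rw [MvPolynomial.notMem_support_iff.1 ha, zero_mul]

lemma wsum_add (g : (V →₀ ℕ) → K) (p q : MvPolynomial V K) :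
    wsum g (p + q) = wsum g p + wsum g q := by
  have h1 : (p + q).support ⊆ p.support ∪ q.support := MvPolynomial.support_add
  rw [wsum_eq_sum_of_subset g h1, wsum_eq_sum_of_subset g (Finset.subset_union_left),
    wsum_eq_sum_of_subset g (Finset.subset_union_right (s₁ := p.support)), ← Finset.sum_add_distrib]
  apply Finset.sum_congr rfl
  intro a _
  rw [MvPolynomial.coeff_add]
  ring

lemma wsum_neg (g : (V →₀ ℕ) → K) (p : MvPolynomial V K) : wsum g (-p) = - wsum g p := by
  rw [wsum, wsum, MvPolynomial.support_neg, ← Finset.sum_neg_distrib]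
  apply Finset.sum_congr rfl
  intro a _
  rw [MvPolynomial.coeff_neg]
  ring

lemma wsum_sub (g : (V →₀ ℕ) → K) (p q : MvPolynomial V K) :
    wsum g (p - q) = wsum g p - wsum g q := by
  rw [sub_eq_add_neg, wsum_add, wsum_neg]
  ring

lemma wsum_zero (g : (V →₀ ℕ) → K) : wsum g (0 : MvPolynomial V K) = 0 := by
  rw [wsum]
  simp

lemma wsum_monomial (g : (V →₀ ℕ) → K) (a : V →₀ ℕ) (c : K) :
    wsum g (MvPolynomial.monomial a c) = c * g a := by
  classical
  rcases eq_or_ne c 0 with rfl | hc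
  · rw [map_zero, wsum_zero, zero_mul]
  · rw [wsum, MvPolynomial.support_monomial, if_neg hc, Finset.sum_singleton,
      MvPolynomial.coeff_monomial, if_pos rfl]

lemma wsum_finsum {ι : Type*} (g : (V →₀ ℕ) → K) (s : Finset ι) (f : ι → MvPolynomial V K) :
    wsum g (∑ i ∈ s, f i) = ∑ i ∈ s, wsum g (f i) := by
  induction s using Finset.cons_induction with
  | empty => simp [wsum_zero]
  | cons i s his ih =>
    rw [Finset.sum_cons, Finset.sum_cons, wsum_add, ih]

lemma wsum_mul_monomial (g : (V →₀ ℕ) → K) (p : MvPolynomial V K) (m : V →₀ ℕ) :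
    wsum g (p * MvPolynomial.monomial m 1) = wsum (fun a => g (a + m)) p := by
  induction p using MvPolynomial.induction_on' with
  | monomial a c =>
    rw [MvPolynomial.monomial_mul, wsum_monomial, wsum_monomial, mul_one]
  | add p q hp hq =>
    rw [add_mul, wsum_add, wsum_add, hp, hq]

end Functional

/-! ### The two vanishing identities -/

section Vanishing

open MvPolynomial

variable {K : Type*} [CommRing K] {k : ℕ} {γ : V → Fin (k+1)}
variable {G : SimpleGraph V} [DecidableRel G.Adj]

/-- exponents modulo `k` -/
def pmod (k : ℕ) (a : V →₀ ℕ) : V → ZMod k := fun w => (a w : ZMod k)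

lemma pmod_add (a b : V →₀ ℕ) : pmod k (a + b) = fun w => pmod k a w + pmod k b w := by
  funext w
  rw [pmod, pmod, pmod, Finsupp.add_apply, Nat.cast_add]

lemma pmod_single_k (u : V) : pmod k (Finsupp.single u k) = fun _ => (0 : ZMod k) := by
  funext w
  rw [pmod, Finsupp.single_apply]
  split
  · exact ZMod.natCast_self k
  · exact Nat.cast_zero

/-- The weight function. -/
noncomputable def Pg (K : Type*) [CommRing K] (G : SimpleGraph V) [DecidableRel G.Adj]
    (k : ℕ) (γ : V → Fin (k+1)) : (V →₀ ℕ) → K := fun a => Phi K G k γ (pmod k a)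

/-- vertex relations vanish -/
lemma wsum_vertex (r : MvPolynomial V K) (u : V) :
    wsum (Pg K G k γ) (r * (X u ^ k - 1)) = 0 := by
  have h1 : r * (X u ^ k - 1) = r * MvPolynomial.monomial (Finsupp.single u k) 1 - r := by
    rw [MvPolynomial.X_pow_eq_monomial]
    ring
  rw [h1, wsum_sub, wsum_mul_monomial]
  have : ∀ a : V →₀ ℕ, Pg K G k γ (a + Finsupp.single u k) = Pg K G k γ a := by
    intro a
    rw [Pg, Pg, pmod_add, pmod_single_k]
    congr 1
    funext w
    rw [add_zero]
  rw [wsum, wsum]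
  rw [Finset.sum_congr rfl (fun a _ => by rw [this a])]
  ring

lemma card_support_le_totalDegree {p : MvPolynomial V K} {a : V →₀ ℕ}
    (ha : a ∈ p.support) : a.support.card ≤ p.totalDegree := by
  have h1 : a.support.card ≤ a.sum (fun _ e => e) := by
    rw [Finsupp.sum, Finset.card_eq_sum_ones]
    apply Finset.sum_le_sum
    intro v hv
    have := Finsupp.mem_support_iff.1 hv
    omega
  exact h1.trans (MvPolynomial.le_totalDegree ha)

/-- edge relations vanish -/
lemma wsum_edge (hk : 3 ≤ k) [NeZero k] (hγ : ∀ ⦃x y⦄, G.Adj x y → γ x ≠ γ y)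
    {u v : V} (hadj : G.Adj u v) (s : MvPolynomial V K) (d : ℕ)
    (hdeg : s.totalDegree ≤ d)
    (hgirth : ((3 * (k * (d + 2)) + 1 : ℕ) : ℕ∞) < G.egirth) :
    wsum (Pg K G k γ) (s * ∑ r ∈ Finset.range k, X u ^ (k - 1 - r) * X v ^ r) = 0 := by
  have huv : u ≠ v := hadj.ne
  rw [Finset.mul_sum, wsum_finsum]
  have hmono : ∀ r : ℕ, (X u ^ (k - 1 - r) * X v ^ r : MvPolynomial V K)
      = MvPolynomial.monomial (Finsupp.single u (k - 1 - r) + Finsupp.single v r) 1 := by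
    intro r
    rw [MvPolynomial.X_pow_eq_monomial, MvPolynomial.X_pow_eq_monomial,
      MvPolynomial.monomial_mul, one_mul]
  have hterm : ∀ r ∈ Finset.range k, wsum (Pg K G k γ) (s * (X u ^ (k - 1 - r) * X v ^ r))
      = wsum (fun a => Pg K G k γ (a + (Finsupp.single u (k - 1 - r) + Finsupp.single v r))) s := by
    intro r _
    rw [hmono r, wsum_mul_monomial]
  rw [Finset.sum_congr rfl hterm]
  -- swap the sums
  simp only [wsum]
  rw [Finset.sum_comm]
  apply Finset.sum_eq_zero
  intro a ha
  rw [← Finset.mul_sum]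
  -- inner sum vanishes by the involution identity
  set c : V → ZMod k := fun w => pmod k a w - (if w = u then 1 else 0) with hc
  have hinner : ∑ r ∈ Finset.range k,
      Pg K G k γ (a + (Finsupp.single u (k - 1 - r) + Finsupp.single v r))
      = ∑ ρ : ZMod k, Phi K G k γ (fun w => c w + ρ * dip k u v w) := by
    refine Finset.sum_nbij' (fun r => ((r : ZMod k))) (fun ρ => ρ.val) ?_ ?_ ?_ ?_ ?_
    · intro r _
      exact Finset.mem_univ _
    · intro ρ _
      exact Finset.mem_range.2 (ZMod.val_lt ρ)
    · intro r hr
      exact ZMod.val_natCast_of_lt (Finset.mem_range.1 hr)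
    · intro ρ _
      exact ZMod.natCast_rightInverse ρ
    · intro r hr
      rw [Finset.mem_range] at hr
      rw [Pg]
      congr 1
      funext w
      rw [pmod_add, pmod_add]
      simp only [pmod, Finsupp.single_apply]
      by_cases hwu : w = u
      · subst hwu
        rw [if_pos rfl, if_neg (fun h => huv h.symm), hc]
        simp only [if_pos rfl, dip_apply, if_neg huv.symm, if_pos rfl]
        have hcast : ((k - 1 - r : ℕ) : ZMod k) = -1 - (r : ZMod k) := by
          have h1 : (k - 1 - r : ℕ) = k - (1 + r) := by omega
          rw [h1, Nat.cast_sub (by omega), Nat.cast_add, ZMod.natCast_self, Nat.cast_one]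
          ring
        rw [hcast]
        simp only [if_true, if_neg huv, pmod]
        ring
      · rw [if_neg (fun h => hwu h.symm)]
        by_cases hwv : w = v
        · subst hwv
          rw [if_pos rfl, hc]
          simp only [if_neg hwu, dip_apply, if_pos rfl, if_true, pmod]
          ring
        · rw [if_neg (fun h => hwv h.symm), hc]
          simp only [if_neg hwu, dip_apply, if_neg hwv, if_neg hwu, pmod]
          ring
  rw [hinner]
  rw [key_E hk hγ hadj c (d + 2) ?_ hgirth, mul_zero]
  -- support bound
  have hsub : Finset.univ.filter (fun w => c w ≠ 0) ∪ {u, v} ⊆ a.support ∪ {u, v} := by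
    intro w hw
    rcases Finset.mem_union.1 hw with hw | hw
    · rw [Finset.mem_filter] at hw
      by_cases hwu : w = u
      · exact Finset.mem_union_right _ (by simp [hwu])
      · apply Finset.mem_union_left
        rw [Finsupp.mem_support_iff]
        intro h0
        apply hw.2
        rw [hc]
        simp only [if_neg hwu, pmod, h0, Nat.cast_zero, sub_zero]
    · exact Finset.mem_union_right _ hw
  have hcard := Finset.card_le_card hsub
  have h2 : (a.support ∪ {u, v}).card ≤ a.support.card + 2 := by
    have := Finset.card_union_le a.support ({u, v} : Finset V)
    have := Finset.card_insert_le u ({v} : Finset V)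
    simp only [Finset.card_singleton] at *
    omega
  have h3 := card_support_le_totalDegree ha
  omega

end Vanishing

end BayerAux

/-- **Theorem (main).** If `G` has chromatic number `k+1` (with `k ≥ 3`) and girth
`g > 4k`, and `K` is an algebraically closed field whose characteristic does not divide
`k`, then for every `d` with `4k(d + k - 1) < g`, Bayer's `k`-coloring system for `G`
has no Nullstellensatz certificate of degree at most `d`. -/
theorem no_nullstellensatz_certificate_of_large_girth
    {V : Type*} [Fintype V] [DecidableEq V]
    (K : Type*) [Field K] [IsAlgClosed K]
    (k : ℕ) (hk : 3 ≤ k) (hchar : ¬ (ringChar K ∣ k))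
    (G : SimpleGraph V) [DecidableRel G.Adj]
    (hchrom : G.chromaticNumber = ((k + 1 : ℕ) : ℕ∞))
    (hgirth : ((4 * k : ℕ) : ℕ∞) < G.egirth)
    (d : ℕ) (hd : ((4 * k * (d + k - 1) : ℕ) : ℕ∞) < G.egirth) :
    ¬ HasNullCert K G k d := by
  classical
  rintro ⟨r, s, hr, hs, heq⟩
  haveI : NeZero k := ⟨by omega⟩
  -- a proper (k+1)-coloring
  have hcol : G.Colorable (k+1) := by
    have h1 : G.chromaticNumber ≤ ((k + 1 : ℕ) : ℕ∞) := le_of_eq hchrom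
    exact (SimpleGraph.chromaticNumber_le_iff_colorable).1 h1
  obtain ⟨C⟩ := hcol
  set γ : V → Fin (k+1) := fun v => C v with hγdef
  have hγ : ∀ ⦃x y⦄, G.Adj x y → γ x ≠ γ y := fun x y h => C.valid h
  -- girth bound in the needed form
  have hgirth' : ((3 * (k * (d + 2)) + 1 : ℕ) : ℕ∞) < G.egirth := by
    refine lt_of_le_of_lt ?_ hd
    apply Nat.cast_le.2
    obtain ⟨m, rfl⟩ : ∃ m, k = m + 3 := ⟨k - 3, by omega⟩
    have h1 : d + (m + 3) - 1 = d + m + 2 := by omega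
    rw [h1]
    nlinarith [Nat.zero_le (m * d), Nat.zero_le m, Nat.zero_le d]
  -- apply the linear functional to the certificate
  have h0 := congrArg (BayerAux.wsum (BayerAux.Pg K G k γ)) heq
  rw [BayerAux.wsum_add, BayerAux.wsum_finsum, BayerAux.wsum_finsum] at h0
  have hv : ∀ u ∈ (Finset.univ : Finset V),
      BayerAux.wsum (BayerAux.Pg K G k γ) (r u * (X u ^ k - 1)) = 0 :=
    fun u _ => BayerAux.wsum_vertex (r u) u
  have he : ∀ e ∈ G.edgeFinset,
      BayerAux.wsum (BayerAux.Pg K G k γ) (s e * bayerQ K k e) = 0 := by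
    intro e hee
    obtain ⟨u, v, rfl, hadj⟩ := BayerAux.edge_rep hee
    have hbq : bayerQ K k s(u,v) = ∑ j ∈ Finset.range k, X u ^ (k - 1 - j) * X v ^ j := rfl
    rw [hbq]
    exact BayerAux.wsum_edge hk hγ hadj (s _) d (hs _ hee) hgirth'
  rw [Finset.sum_eq_zero hv, Finset.sum_eq_zero he, add_zero] at h0
  -- but the functional sends 1 to 1
  have h1 : BayerAux.wsum (BayerAux.Pg K G k γ) (1 : MvPolynomial V K) = 1 := by
    have hone : (1 : MvPolynomial V K) = MvPolynomial.monomial 0 1 := by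
      rw [MvPolynomial.monomial_zero', MvPolynomial.C_1]
    rw [hone, BayerAux.wsum_monomial, one_mul, BayerAux.Pg]
    have hp0 : BayerAux.pmod k (0 : V →₀ ℕ) = fun _ => (0 : ZMod k) := by
      funext w
      rw [BayerAux.pmod]
      simp
    rw [hp0]
    exact BayerAux.Phi_zero hk hγ
  rw [h1] at h0
  exact one_ne_zero h0.symm
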